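/- Let M be an n×n symmetric negative definite matrix with nonnegative off-diagonal entries, and suppose the graph on {1,…,n} with an edge between i ≠ j whenever M_{ij} > 0 is connected. Then every nonzero x ∈ ℤ^n with M·x ≤ 0 componentwise satisfies x_i > 0 for every i. -/

import Mathlib

theorem lipman_cone_pos {n : ℕ} (M : Matrix (Fin n) (Fin n) ℤ)
    (hsymm : M.IsSymm)
    (hnegdef : (-(M.map (Int.cast : ℤ → ℝ))).PosDef)
    (hoff : ∀ i j, i ≠ j → 0 ≤ M i j)
    (hconn : (SimpleGraph.fromRel (fun i j => 0 < M i j)).Connected)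
    (x : Fin n → ℤ) (hx0 : x ≠ 0) (hx : ∀ i, M.mulVec x i ≤ 0) :
    ∀ i, 0 < x i := by
  classical
  -- Step 1: x ≥ 0
  set y : Fin n → ℤ := fun i => max (-x i) 0 with hy
  have hy0 : ∀ i, 0 ≤ y i := fun i => le_max_right _ _
  have hp0 : ∀ i, 0 ≤ x i + y i := by
    intro i
    rcases le_or_gt (x i) 0 with h | h
    · simp [hy, max_eq_left (neg_nonneg.mpr h)]
    · have : y i = 0 := max_eq_right (neg_nonpos.mpr h.le)
      simp [this, h.le]
  have hyp : ∀ i, y i * (x i + y i) = 0 := by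
    intro i
    rcases le_or_gt (x i) 0 with h | h
    · have : y i = -x i := max_eq_left (neg_nonneg.mpr h)
      simp [this]
    · have : y i = 0 := max_eq_right (neg_nonpos.mpr h.le)
      simp [this]
  have hq1 : 0 ≤ dotProduct y (M.mulVec (fun i => x i + y i)) := by
    unfold Matrix.mulVec dotProduct
    refine Finset.sum_nonneg fun i _ => ?_
    rw [Finset.mul_sum]
    refine Finset.sum_nonneg fun j _ => ?_
    rcases eq_or_ne i j with rfl | hij
    · have : y i * (M i i * (x i + y i)) = M i i * (y i * (x i + y i)) := by ring
      rw [this, hyp i, mul_zero]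
    · exact mul_nonneg (hy0 i) (mul_nonneg (hoff i j hij) (hp0 j))
  have hq2 : dotProduct y (M.mulVec x) ≤ 0 := by
    refine Finset.sum_nonpos fun i _ => mul_nonpos_of_nonneg_of_nonpos (hy0 i) (hx i)
  have hq : 0 ≤ dotProduct y (M.mulVec y) := by
    have : (fun i => x i + y i) = x + y := rfl
    have h3 : dotProduct y (M.mulVec (fun i => x i + y i)) = dotProduct y (M.mulVec x) + dotProduct y (M.mulVec y) := by
      rw [this, Matrix.mulVec_add, dotProduct_add]
    linarith
  have hyzero : y = 0 := by
    by_contra hne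
    have hv : (fun i => (y i : ℝ)) ≠ 0 := by
      intro h
      apply hne
      funext i
      have := congrFun h i
      simp only [Pi.zero_apply] at this
      exact_mod_cast this
    have hpos := (Matrix.posDef_iff_dotProduct_mulVec.mp hnegdef).2 hv
    have hcast : dotProduct (star (fun i => (y i : ℝ))) ((-(M.map (Int.cast : ℤ → ℝ))).mulVec (fun i => (y i : ℝ)))
        = -((dotProduct y (M.mulVec y) : ℤ) : ℝ) := by
      simp only [Matrix.neg_mulVec, dotProduct_neg, neg_inj]
      unfold Matrix.mulVec dotProduct
      push_cast
      simp [Matrix.map_apply]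
    rw [hcast] at hpos
    have : (dotProduct y (M.mulVec y) : ℤ) < 0 := by exact_mod_cast neg_pos.mp hpos
    linarith
  have hnn : ∀ i, 0 ≤ x i := by
    intro i
    have := congrFun hyzero i
    simp only [hy, Pi.zero_apply] at this
    have : -x i ≤ 0 := le_of_max_le_left (le_of_eq this)
    linarith
  -- Step 2: positivity via connectivity
  have step : ∀ a b, (SimpleGraph.fromRel fun i j => 0 < M i j).Adj a b → x a = 0 → x b = 0 := by
    intro a b hab ha
    rw [SimpleGraph.fromRel_adj] at hab
    obtain ⟨hne, hr⟩ := hab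
    have hMab : 0 < M a b := by
      rcases hr with h | h
      · exact h
      · rw [← hsymm.apply a b]; exact h
    have hsum : ∑ k, M a k * x k = 0 := by
      have h1 : ∑ k, M a k * x k ≤ 0 := hx a
      have h2 : 0 ≤ ∑ k, M a k * x k := by
        refine Finset.sum_nonneg fun k _ => ?_
        rcases eq_or_ne a k with rfl | hak
        · simp [ha]
        · exact mul_nonneg (hoff a k hak) (hnn k)
      linarith
    have heach := (Finset.sum_eq_zero_iff_of_nonneg (fun k _ => by
      rcases eq_or_ne a k with rfl | hak
      · simp [ha]
      · exact mul_nonneg (hoff a k hak) (hnn k))).mp hsum b (Finset.mem_univ b)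
    rcases mul_eq_zero.mp heach with h | h
    · exact absurd h hMab.ne'
    · exact h
  have key : ∀ a b (w : (SimpleGraph.fromRel fun i j => 0 < M i j).Walk a b), x a = 0 → x b = 0 := by
    intro a b w
    induction w with
    | nil => exact id
    | cons h p ih => intro ha; exact ih (step _ _ h ha)
  intro i
  rcases lt_or_eq_of_le (hnn i) with h | h
  · exact h
  · exfalso
    apply hx0
    funext j
    obtain ⟨w⟩ := (hconn i j)
    exact key i j w h.symm
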